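/- For every real parameter λ ≥ 1, the map ϱ̃^(λ) is admissible with the linear order ≤_ZX: for all α, β, γ ∈ Ĩ with α ≤_ZX β ≤_ZX γ, one has ϱ̃^(λ)(α, β) ≤ ϱ̃^(λ)(α, γ) and ϱ̃^(λ)(β, γ) ≤ ϱ̃^(λ)(α, γ). -/
import Mathlib


/-- The set of intuitionistic fuzzy values (IFVs). -/
def Itilde : Set (ℝ × ℝ) :=
  {p | 0 ≤ p.1 ∧ p.1 ≤ 1 ∧ 0 ≤ p.2 ∧ p.2 ≤ 1 ∧ p.1 + p.2 ≤ 1}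

/-- Accuracy degree `h(α) = μ_α + ν_α`. -/
def accuracy (p : ℝ × ℝ) : ℝ := p.1 + p.2

/-- The similarity function `L(α) = (1 - ν_α)/((1 - μ_α) + (1 - ν_α))`. -/
noncomputable def Lfun (p : ℝ × ℝ) : ℝ := (1 - p.2) / ((1 - p.1) + (1 - p.2))

/-- The Zhang–Xu linear order `≤_ZX`: `a ≤_ZX b` iff `L(a) < L(b)`, or
`L(a) = L(b)` and `h(a) ≤ h(b)`. -/
noncomputable def zxLE (a b : ℝ × ℝ) : Prop :=
  Lfun a < Lfun b ∨ (Lfun a = Lfun b ∧ accuracy a ≤ accuracy b)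

/-- The parametric distance measure `ϱ̃^(λ)`. -/
noncomputable def vrhoT (l : ℝ) (a b : ℝ × ℝ) : ℝ :=
  if Lfun a ≠ Lfun b then (1 + l * |Lfun a - Lfun b|) / (1 + l)
  else |accuracy a - accuracy b| / (1 + l)

lemma accuracy_mem {p : ℝ × ℝ} (hp : p ∈ Itilde) : 0 ≤ accuracy p ∧ accuracy p ≤ 1 := by
  obtain ⟨h1, h2, h3, h4, h5⟩ := hp
  constructor <;> simp [accuracy] <;> linarith

/-- For `l ≥ 1`, `ϱ̃ᶫ` is admissible with `≤_ZX`. -/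
theorem vrhoT_admissible_zx (l : ℝ) (hl : 1 ≤ l) (a b c : ℝ × ℝ)
    (ha : a ∈ Itilde) (hb : b ∈ Itilde) (hc : c ∈ Itilde)
    (hab : zxLE a b) (hbc : zxLE b c) :
    vrhoT l a b ≤ vrhoT l a c ∧ vrhoT l b c ≤ vrhoT l a c := by
  have hlpos : (0:ℝ) < 1 + l := by linarith
  obtain ⟨ha0, ha1⟩ := accuracy_mem ha
  obtain ⟨hb0, hb1⟩ := accuracy_mem hb
  obtain ⟨hc0, hc1⟩ := accuracy_mem hc
  rcases hab with h1 | ⟨h1, h1'⟩ <;> rcases hbc with h2 | ⟨h2, h2'⟩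
  · -- La < Lb < Lc
    have hac : Lfun a < Lfun c := lt_trans h1 h2
    rw [vrhoT, vrhoT, vrhoT, if_pos (ne_of_lt h1), if_pos (ne_of_lt h2), if_pos (ne_of_lt hac)]
    rw [abs_of_neg (by linarith), abs_of_neg (by linarith), abs_of_neg (by linarith)]
    constructor <;> apply div_le_div_of_nonneg_right _ hlpos.le <;> nlinarith
  · -- La < Lb = Lc
    have hac : Lfun a < Lfun c := h2 ▸ h1
    rw [vrhoT, vrhoT, vrhoT, if_pos (ne_of_lt h1), if_pos (ne_of_lt hac),
      if_neg (by simpa using h2)]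
    constructor
    · rw [h2]
    · apply div_le_div_of_nonneg_right _ hlpos.le
      have : |accuracy b - accuracy c| ≤ 1 := by
        rw [abs_le]; constructor <;> linarith
      nlinarith [abs_nonneg (Lfun a - Lfun c)]
  · -- La = Lb < Lc
    have hac : Lfun a < Lfun c := h1 ▸ h2
    rw [vrhoT, vrhoT, vrhoT, if_neg (by simpa using h1), if_pos (ne_of_lt hac),
      if_pos (ne_of_lt h2)]
    constructor
    · apply div_le_div_of_nonneg_right _ hlpos.le
      have : |accuracy a - accuracy b| ≤ 1 := by
        rw [abs_le]; constructor <;> linarith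
      nlinarith [abs_nonneg (Lfun a - Lfun c)]
    · rw [h1]
  · -- all equal
    have hac : Lfun a = Lfun c := h1.trans h2
    rw [vrhoT, vrhoT, vrhoT, if_neg (by simpa using h1), if_neg (by simpa using hac),
      if_neg (by simpa using h2)]
    rw [abs_of_nonpos (by linarith), abs_of_nonpos (by linarith),
      abs_of_nonpos (by linarith)]
    constructor <;> apply div_le_div_of_nonneg_right _ hlpos.le <;> linarith
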